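/- Blockwise scale equivariance of the S-estimation problem with respect to the responses. Let A = diag(a₁,…,a_m) with all a_j ≠ 0, and consider the transformed SUR data with unchanged design matrices X_j and responses a_j y_j (equivalently, responses Y A). Then a pair (B, C) with B = bdiag(b₁,…,b_m) and C symmetric positive definite is a global minimizer of the S-estimation problem for the original data (X₁,…,X_m, Y) if and only if (bdiag(a₁ b₁, …, a_m b_m), A C A) is a global minimizer of the S-estimation problem for the transformed data. -/

import Mathlib

open Matrix

noncomputable section

/-- The index set of the stacked coefficient vector of a SUR model with `m` blocks,
where block `j` has `pdim j` predictors. -/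
abbrev SURIdx (m : ℕ) (pdim : Fin m → ℕ) : Type := (j : Fin m) × Fin (pdim j)

/-- A ρ-function with tuning constant `c`. -/
def IsRhoFunction (ρ : ℝ → ℝ) (c : ℝ) : Prop :=
  0 < c ∧ (∀ u, ρ (-u) = ρ u) ∧ ContDiff ℝ 2 ρ ∧ ρ 0 = 0 ∧
    StrictMonoOn ρ (Set.Icc 0 c) ∧ ∀ u, c ≤ u → ρ u = ρ c

/-- Residual of observation `i`: the `i`-th row of `Y − X̃ B`, where `B` is the
block-diagonal coefficient matrix built from the stacked coefficient vector `b`. -/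
def resid {n m : ℕ} {pdim : Fin m → ℕ} (X : Matrix (Fin n) (SURIdx m pdim) ℝ)
    (Y : Matrix (Fin n) (Fin m) ℝ) (b : SURIdx m pdim → ℝ) (i : Fin n) : Fin m → ℝ :=
  fun j => Y i j - ∑ k : Fin (pdim j), X i ⟨j, k⟩ * b ⟨j, k⟩

/-- The S-estimation constraint `(1/n) Σᵢ ρ₀(√(eᵢ(B)ᵀ C⁻¹ eᵢ(B))) = δ₀`. -/
def SConstraint {n m : ℕ} {pdim : Fin m → ℕ} (ρ₀ : ℝ → ℝ) (δ₀ : ℝ)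
    (X : Matrix (Fin n) (SURIdx m pdim) ℝ) (Y : Matrix (Fin n) (Fin m) ℝ)
    (b : SURIdx m pdim → ℝ) (C : Matrix (Fin m) (Fin m) ℝ) : Prop :=
  (1 / (n : ℝ)) * ∑ i, ρ₀ (Real.sqrt (resid X Y b i ⬝ᵥ C⁻¹.mulVec (resid X Y b i))) = δ₀

/-- `(b, C)` is a global minimizer of the S-estimation problem: `C` is symmetric positive
definite, the constraint holds, and `det C` is minimal among all feasible pairs. -/
def IsSMin {n m : ℕ} {pdim : Fin m → ℕ} (ρ₀ : ℝ → ℝ) (δ₀ : ℝ)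
    (X : Matrix (Fin n) (SURIdx m pdim) ℝ) (Y : Matrix (Fin n) (Fin m) ℝ)
    (b : SURIdx m pdim → ℝ) (C : Matrix (Fin m) (Fin m) ℝ) : Prop :=
  C.PosDef ∧ SConstraint ρ₀ δ₀ X Y b C ∧
    ∀ (b' : SURIdx m pdim → ℝ) (C' : Matrix (Fin m) (Fin m) ℝ),
      C'.PosDef → SConstraint ρ₀ δ₀ X Y b' C' → C.det ≤ C'.det

/-! ### auxiliary lemmas -/

lemma inv_diag {m : ℕ} {a : Fin m → ℝ} (ha : ∀ j, a j ≠ 0) :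
    (Matrix.diagonal a)⁻¹ = Matrix.diagonal (fun j => (a j)⁻¹) := by
  apply Matrix.inv_eq_right_inv
  rw [Matrix.diagonal_mul_diagonal]
  have h : (fun j => a j * (a j)⁻¹) = fun _ => (1:ℝ) := funext fun j => mul_inv_cancel₀ (ha j)
  rw [h, Matrix.diagonal_one]

lemma diag_mulVec {m : ℕ} (a : Fin m → ℝ) (x : Fin m → ℝ) :
    (Matrix.diagonal a) *ᵥ x = fun j => a j * x j := by
  funext j; simp [Matrix.mulVec_diagonal]

lemma quad_eq {m : ℕ} {a : Fin m → ℝ} (ha : ∀ j, a j ≠ 0)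
    (C : Matrix (Fin m) (Fin m) ℝ) (e : Fin m → ℝ) :
    (fun j => a j * e j) ⬝ᵥ
      (Matrix.diagonal a * C * Matrix.diagonal a)⁻¹ *ᵥ (fun j => a j * e j) =
      e ⬝ᵥ C⁻¹ *ᵥ e := by
  rw [Matrix.mul_inv_rev, Matrix.mul_inv_rev, inv_diag ha,
    ← Matrix.mulVec_mulVec, ← Matrix.mulVec_mulVec, diag_mulVec, diag_mulVec]
  have h1 : (fun j => (a j)⁻¹ * (a j * e j)) = e :=
    funext fun j => inv_mul_cancel_left₀ (ha j) _
  rw [h1]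
  simp only [dotProduct]
  refine Finset.sum_congr rfl fun j _ => ?_
  linear_combination e j * (C⁻¹ *ᵥ e) j * mul_inv_cancel₀ (ha j)

lemma resid_scale {n m : ℕ} {pdim : Fin m → ℕ} (X : Matrix (Fin n) (SURIdx m pdim) ℝ)
    (Y : Matrix (Fin n) (Fin m) ℝ) (a : Fin m → ℝ) (b : SURIdx m pdim → ℝ) (i : Fin n) :
    resid X (Matrix.of fun i j => a j * Y i j) (fun q => a q.1 * b q) i =
      fun j => a j * resid X Y b i j := by
  funext j
  simp only [resid, Matrix.of_apply, mul_sub, Finset.mul_sum]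
  congr 1
  apply Finset.sum_congr rfl
  intro k _
  ring

lemma scon_iff {n m : ℕ} {pdim : Fin m → ℕ} (ρ₀ : ℝ → ℝ) (δ₀ : ℝ)
    (X : Matrix (Fin n) (SURIdx m pdim) ℝ) (Y : Matrix (Fin n) (Fin m) ℝ)
    {a : Fin m → ℝ} (ha : ∀ j, a j ≠ 0)
    (b : SURIdx m pdim → ℝ) (C : Matrix (Fin m) (Fin m) ℝ) :
    SConstraint ρ₀ δ₀ X (Matrix.of fun i j => a j * Y i j) (fun q => a q.1 * b q)
        (Matrix.diagonal a * C * Matrix.diagonal a) ↔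
      SConstraint ρ₀ δ₀ X Y b C := by
  unfold SConstraint
  constructor <;> intro h <;> rw [← h] <;> congr 1 <;>
    apply Finset.sum_congr rfl <;> intro i _ <;>
    rw [resid_scale, quad_eq ha]

lemma posdef_DCD {m : ℕ} {a : Fin m → ℝ} (ha : ∀ j, a j ≠ 0)
    {C : Matrix (Fin m) (Fin m) ℝ} (hC : C.PosDef) :
    (Matrix.diagonal a * C * Matrix.diagonal a).PosDef := by
  refine Matrix.PosDef.of_dotProduct_mulVec_pos ?_ ?_
  · have hd : (Matrix.diagonal a)ᴴ = Matrix.diagonal a := by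
      simp [Matrix.conjTranspose, Matrix.diagonal_transpose]
    show (Matrix.diagonal a * C * Matrix.diagonal a)ᴴ = _
    rw [Matrix.conjTranspose_mul, Matrix.conjTranspose_mul, hd, hC.1.eq, Matrix.mul_assoc]
  · intro x hx
    have hx' : (fun j => a j * x j) ≠ 0 := by
      intro h
      apply hx
      funext j
      have := congrFun h j
      simp only [Pi.zero_apply] at this ⊢
      exact (mul_eq_zero.mp this).resolve_left (ha j)
    have hpos := hC.dotProduct_mulVec_pos hx'
    simp only [star_trivial] at hpos ⊢
    rw [← Matrix.mulVec_mulVec, ← Matrix.mulVec_mulVec, diag_mulVec, diag_mulVec]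
    have key : x ⬝ᵥ (fun j => a j * (C *ᵥ fun j => a j * x j) j) =
        (fun j => a j * x j) ⬝ᵥ (C *ᵥ fun j => a j * x j) := by
      simp only [dotProduct]
      exact Finset.sum_congr rfl fun j _ => by ring
    rw [key]
    exact hpos

lemma smin_forward {n m : ℕ} {pdim : Fin m → ℕ}
    (ρ₀ : ℝ → ℝ) (δ₀ : ℝ)
    (X : Matrix (Fin n) (SURIdx m pdim) ℝ) (Y : Matrix (Fin n) (Fin m) ℝ)
    (a : Fin m → ℝ) (ha : ∀ j, a j ≠ 0)
    (b : SURIdx m pdim → ℝ) (C : Matrix (Fin m) (Fin m) ℝ)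
    (h : IsSMin ρ₀ δ₀ X Y b C) :
    IsSMin ρ₀ δ₀ X (Matrix.of fun i j => a j * Y i j) (fun q => a q.1 * b q)
      (Matrix.diagonal a * C * Matrix.diagonal a) := by
  obtain ⟨hC, hcon, hmin⟩ := h
  have ha' : ∀ j, (a j)⁻¹ ≠ 0 := fun j => inv_ne_zero (ha j)
  refine ⟨posdef_DCD ha hC, (scon_iff ρ₀ δ₀ X Y ha b C).mpr hcon, ?_⟩
  intro b' C' hC' hcon'
  -- pull back (b', C') along the inverse transformation
  set b'' : SURIdx m pdim → ℝ := fun q => (a q.1)⁻¹ * b' q with hb''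
  set C'' : Matrix (Fin m) (Fin m) ℝ :=
    Matrix.diagonal (fun j => (a j)⁻¹) * C' * Matrix.diagonal (fun j => (a j)⁻¹) with hC''def
  have hDD : Matrix.diagonal a * Matrix.diagonal (fun j => (a j)⁻¹) = 1 := by
    rw [Matrix.diagonal_mul_diagonal]
    have h : (fun j => a j * (a j)⁻¹) = fun _ => (1:ℝ) := funext fun j => mul_inv_cancel₀ (ha j)
    rw [h, Matrix.diagonal_one]
  have hback : Matrix.diagonal a * C'' * Matrix.diagonal a = C' := by
    rw [hC''def]
    have : Matrix.diagonal a * (Matrix.diagonal (fun j => (a j)⁻¹) * C' *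
        Matrix.diagonal (fun j => (a j)⁻¹)) * Matrix.diagonal a
        = (Matrix.diagonal a * Matrix.diagonal (fun j => (a j)⁻¹)) * C' *
          (Matrix.diagonal (fun j => (a j)⁻¹) * Matrix.diagonal a) := by
      noncomm_ring
    rw [this, hDD, Matrix.diagonal_mul_diagonal, Matrix.one_mul]
    have : (fun j => (a j)⁻¹ * a j) = fun _ => (1:ℝ) := by
      funext j; exact inv_mul_cancel₀ (ha j)
    rw [this, Matrix.diagonal_one, Matrix.mul_one]
  have hbback : (fun q : SURIdx m pdim => a q.1 * b'' q) = b' := by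
    funext q; rw [hb'']; exact mul_inv_cancel_left₀ (ha q.1) _
  have hcon'' : SConstraint ρ₀ δ₀ X Y b'' C'' := by
    rw [← scon_iff ρ₀ δ₀ X Y ha b'' C'', hbback, hback]
    exact hcon'
  have hC''pos : C''.PosDef := by
    have := posdef_DCD ha' hC'
    exact this
  have hle := hmin b'' C'' hC''pos hcon''
  -- determinant bookkeeping
  have hdet' : C'.det = (∏ j, a j)^2 * C''.det := by
    rw [← hback]
    simp [Matrix.det_mul, Matrix.det_diagonal]
    ring
  have hdet : (Matrix.diagonal a * C * Matrix.diagonal a).det = (∏ j, a j)^2 * C.det := by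
    simp [Matrix.det_mul, Matrix.det_diagonal]
    ring
  rw [hdet, hdet']
  exact mul_le_mul_of_nonneg_left hle (sq_nonneg _)

/-- **Blockwise scale equivariance of the S-estimation problem with respect to the
responses**: for `A = diag(a₁,…,a_m)` with all `a_j ≠ 0`, `(B, C)` minimizes the
S-problem for the data `(X₁,…,X_m, Y)` iff `(bdiag(a₁b₁,…,a_mb_m), A C A)` minimizes it
for the data with responses `Y A`. -/
theorem S_scale_equivariance_responses
    {n m : ℕ} (hm : 1 < m) {pdim : Fin m → ℕ}
    (ρ₀ : ℝ → ℝ) (c₀ : ℝ) (hρ₀ : IsRhoFunction ρ₀ c₀)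
    (δ₀ : ℝ) (hδ : 0 < δ₀ ∧ δ₀ < ρ₀ c₀)
    (X : Matrix (Fin n) (SURIdx m pdim) ℝ) (Y : Matrix (Fin n) (Fin m) ℝ)
    (a : Fin m → ℝ) (ha : ∀ j, a j ≠ 0)
    (b : SURIdx m pdim → ℝ) (C : Matrix (Fin m) (Fin m) ℝ) :
    IsSMin ρ₀ δ₀ X Y b C ↔
      IsSMin ρ₀ δ₀ X
        (Matrix.of fun i j => a j * Y i j)
        (fun q => a q.1 * b q)
        (Matrix.diagonal a * C * Matrix.diagonal a) := by
  constructor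
  · exact smin_forward ρ₀ δ₀ X Y a ha b C
  · intro h
    have ha' : ∀ j, (a j)⁻¹ ≠ 0 := fun j => inv_ne_zero (ha j)
    have := smin_forward ρ₀ δ₀ X (Matrix.of fun i j => a j * Y i j)
      (fun j => (a j)⁻¹) ha' (fun q => a q.1 * b q)
      (Matrix.diagonal a * C * Matrix.diagonal a) h
    have hY : (Matrix.of fun i j => (a j)⁻¹ * (Matrix.of fun i j => a j * Y i j) i j) = Y := by
      ext i j
      simp only [Matrix.of_apply]
      exact inv_mul_cancel_left₀ (ha j) _
    have hb : (fun q : SURIdx m pdim => (a q.1)⁻¹ * (a q.1 * b q)) = b := by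
      funext q; exact inv_mul_cancel_left₀ (ha q.1) _
    have hDD : Matrix.diagonal (fun j => (a j)⁻¹) * Matrix.diagonal a = 1 := by
      rw [Matrix.diagonal_mul_diagonal]
      have h : (fun j => (a j)⁻¹ * a j) = fun _ => (1:ℝ) := funext fun j => inv_mul_cancel₀ (ha j)
      rw [h, Matrix.diagonal_one]
    have hCC : Matrix.diagonal (fun j => (a j)⁻¹) *
        (Matrix.diagonal a * C * Matrix.diagonal a) *
        Matrix.diagonal (fun j => (a j)⁻¹) = C := by
      have h1 : Matrix.diagonal (fun j => (a j)⁻¹) *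
          (Matrix.diagonal a * C * Matrix.diagonal a) *
          Matrix.diagonal (fun j => (a j)⁻¹)
          = (Matrix.diagonal (fun j => (a j)⁻¹) * Matrix.diagonal a) * C *
            (Matrix.diagonal a * Matrix.diagonal (fun j => (a j)⁻¹)) := by
        noncomm_ring
      have h2 : Matrix.diagonal a * Matrix.diagonal (fun j => (a j)⁻¹) = 1 := by
        rw [Matrix.diagonal_mul_diagonal]
        have h : (fun j => a j * (a j)⁻¹) = fun _ => (1:ℝ) := funext fun j => mul_inv_cancel₀ (ha j)
        rw [h, Matrix.diagonal_one]
      rw [h1, hDD, h2, Matrix.one_mul, Matrix.mul_one]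
    rw [hY, hb, hCC] at this
    exact this
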